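/- For every odd integer t and every natural number j, the single-qubit equatorial measurement operator M = cos(π t / 2^j)·σx + sin(π t / 2^j)·σy belongs to the (j+1)-st level Cl_{j+1} of the Clifford hierarchy. -/
import Mathlib


open scoped BigOperators

/-- The Pauli X matrix. -/
noncomputable def sigmaX : Matrix (Fin 2) (Fin 2) ℂ := !![0, 1; 1, 0]

/-- The Pauli Y matrix. -/
noncomputable def sigmaY : Matrix (Fin 2) (Fin 2) ℂ := !![0, -Complex.I; Complex.I, 0]

/-- The Pauli Z matrix. -/
noncomputable def sigmaZ : Matrix (Fin 2) (Fin 2) ℂ := !![1, 0; 0, -1]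

/-- Equatorial single-qubit measurement operator with angle `α`. -/
noncomputable def Meq (α : ℝ) : Matrix (Fin 2) (Fin 2) ℂ :=
  (Real.cos α : ℂ) • sigmaX + (Real.sin α : ℂ) • sigmaY

/-- The single-qubit Pauli group: the (sub)monoid of `M₂(ℂ)` generated by
`σx`, `σz` and `i·I` (each generator is invertible inside this set, so it is a group). -/
noncomputable def Pauli : Set (Matrix (Fin 2) (Fin 2) ℂ) :=
  (Submonoid.closure {sigmaX, sigmaZ, Complex.I • (1 : Matrix (Fin 2) (Fin 2) ℂ)} :
    Submonoid (Matrix (Fin 2) (Fin 2) ℂ))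

/-- The single-qubit Clifford hierarchy: `Cl 1 = 𝒫` and
`Cl (k+1) = {U unitary | U P U† ∈ Cl k for all P ∈ 𝒫}` (we also set `Cl 0 = 𝒫`). -/
noncomputable def Cl : ℕ → Set (Matrix (Fin 2) (Fin 2) ℂ)
  | 0 => Pauli
  | 1 => Pauli
  | (k + 2) => {U | U ∈ Matrix.unitaryGroup (Fin 2) ℂ ∧
      ∀ P ∈ Pauli, U * P * U.conjTranspose ∈ Cl (k + 1)}

open Matrix

----------------- auxiliary -----------------

noncomputable def Xp : Bool → Matrix (Fin 2) (Fin 2) ℂ := fun b => if b then sigmaX else 1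
noncomputable def Zp : Bool → Matrix (Fin 2) (Fin 2) ℂ := fun c => if c then sigmaZ else 1

lemma X_mem : sigmaX ∈ Pauli := Submonoid.subset_closure (by simp)
lemma Z_mem : sigmaZ ∈ Pauli := Submonoid.subset_closure (by simp)
lemma iI_mem : (Complex.I • (1 : Matrix (Fin 2) (Fin 2) ℂ)) ∈ Pauli :=
  Submonoid.subset_closure (by simp)
lemma Pauli_one : (1 : Matrix (Fin 2) (Fin 2) ℂ) ∈ Pauli := Submonoid.one_mem _
lemma Pauli_mul {A B : Matrix (Fin 2) (Fin 2) ℂ} (hA : A ∈ Pauli) (hB : B ∈ Pauli) :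
    A * B ∈ Pauli := Submonoid.mul_mem _ hA hB

lemma Ipow_mem (a : ℕ) : (Complex.I ^ a • (1 : Matrix (Fin 2) (Fin 2) ℂ)) ∈ Pauli := by
  have : (Complex.I • (1 : Matrix (Fin 2) (Fin 2) ℂ)) ^ a
      = Complex.I ^ a • (1 : Matrix (Fin 2) (Fin 2) ℂ) := by
    rw [smul_pow, one_pow]
  rw [← this]
  exact Submonoid.pow_mem _ iI_mem a

lemma Xp_false : Xp false = 1 := rfl
lemma Xp_true : Xp true = sigmaX := rfl
lemma Zp_false : Zp false = 1 := rfl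
lemma Zp_true : Zp true = sigmaZ := rfl

lemma Xp_mem (b : Bool) : Xp b ∈ Pauli := by cases b <;> simp [Xp] <;> [exact Pauli_one; exact X_mem]
lemma Zp_mem (c : Bool) : Zp c ∈ Pauli := by cases c <;> simp [Zp] <;> [exact Pauli_one; exact Z_mem]

lemma form_mem (a : ℕ) (b c : Bool) : Complex.I ^ a • (Xp b * Zp c) ∈ Pauli := by
  have : Complex.I ^ a • (Xp b * Zp c)
      = (Complex.I ^ a • (1 : Matrix (Fin 2) (Fin 2) ℂ)) * (Xp b * Zp c) := by
    rw [smul_mul_assoc, one_mul]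
  rw [this]
  exact Pauli_mul (Ipow_mem a) (Pauli_mul (Xp_mem b) (Zp_mem c))

lemma Pauli_star {P : Matrix (Fin 2) (Fin 2) ℂ} (h : P ∈ Pauli) : Pᴴ ∈ Pauli := by
  induction h using Submonoid.closure_induction with
  | mem x hx =>
    rcases hx with h | h | h
    · subst h
      have : sigmaXᴴ = sigmaX := by
        ext i j; fin_cases i <;> fin_cases j <;> simp [sigmaX, Matrix.conjTranspose_apply]
      rw [this]; exact X_mem
    · subst h
      have : sigmaZᴴ = sigmaZ := by
        ext i j; fin_cases i <;> fin_cases j <;> simp [sigmaZ, Matrix.conjTranspose_apply]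
      rw [this]; exact Z_mem
    · simp only [Set.mem_singleton_iff] at h; subst h
      have : (Complex.I • (1 : Matrix (Fin 2) (Fin 2) ℂ))ᴴ
          = Complex.I ^ 3 • (1 : Matrix (Fin 2) (Fin 2) ℂ) := by
        rw [Matrix.conjTranspose_smul, Matrix.conjTranspose_one]
        congr 1
        simp [pow_succ, Complex.I_sq, Complex.star_def, Complex.conj_I]
      rw [this]; exact Ipow_mem 3
  | one => rw [Matrix.conjTranspose_one]; exact Pauli_one
  | mul x y _ _ hx hy => rw [Matrix.conjTranspose_mul]; exact Pauli_mul hy hx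

lemma Pauli_unitary {P : Matrix (Fin 2) (Fin 2) ℂ} (h : P ∈ Pauli) :
    P ∈ Matrix.unitaryGroup (Fin 2) ℂ := by
  revert P
  suffices h : Submonoid.closure {sigmaX, sigmaZ, Complex.I • (1 : Matrix (Fin 2) (Fin 2) ℂ)}
      ≤ Matrix.unitaryGroup (Fin 2) ℂ by
    intro P hP; exact h hP
  rw [Submonoid.closure_le]
  rintro P (h | h | h)
  · subst h
    constructor <;>
      · ext i j; fin_cases i <;> fin_cases j <;>
          simp [sigmaX, Matrix.star_eq_conjTranspose, Matrix.conjTranspose_apply,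
            Matrix.mul_apply, Fin.sum_univ_two, Matrix.one_apply]
  · subst h
    constructor <;>
      · ext i j; fin_cases i <;> fin_cases j <;>
          simp [sigmaZ, Matrix.star_eq_conjTranspose, Matrix.conjTranspose_apply,
            Matrix.mul_apply, Fin.sum_univ_two, Matrix.one_apply]
  · simp only [Set.mem_singleton_iff] at h; subst h
    constructor <;>
      · ext i j; fin_cases i <;> fin_cases j <;>
          simp [Matrix.star_eq_conjTranspose, Matrix.conjTranspose_apply,
            Matrix.mul_apply, Fin.sum_univ_two, Matrix.one_apply, Complex.star_def]

/-- `Pauli ⊆ Cl k` and `Cl k` is closed under left/right multiplication by Pauli. -/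
lemma Cl_key : ∀ k, (∀ P ∈ Pauli, P ∈ Cl k) ∧
    (∀ Q ∈ Pauli, ∀ U ∈ Cl k, Q * U ∈ Cl k ∧ U * Q ∈ Cl k) := by
  intro k
  induction k using Nat.strong_induction_on with
  | _ k ih =>
    match k with
    | 0 =>
      exact ⟨fun P hP => hP, fun Q hQ U hU => ⟨Pauli_mul hQ hU, Pauli_mul hU hQ⟩⟩
    | 1 =>
      exact ⟨fun P hP => hP, fun Q hQ U hU => ⟨Pauli_mul hQ hU, Pauli_mul hU hQ⟩⟩
    | (k + 2) =>
      obtain ⟨ihP, ihM⟩ := ih (k + 1) (by omega)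
      constructor
      · intro P hP
        exact ⟨Pauli_unitary hP,
          fun Q hQ => ihP _ (Pauli_mul (Pauli_mul hP hQ) (Pauli_star hP))⟩
      · intro Q hQ U hU
        obtain ⟨hUu, hUc⟩ := hU
        constructor
        · refine ⟨mul_mem (Pauli_unitary hQ) hUu, fun P hP => ?_⟩
          have h1 : (Q * U) * P * (Q * U)ᴴ = Q * ((U * P * Uᴴ) * Qᴴ) := by
            rw [Matrix.conjTranspose_mul]; simp only [mul_assoc]
          rw [h1]
          exact (ihM Q hQ _ ((ihM Qᴴ (Pauli_star hQ) _ (hUc P hP)).2)).1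
        · refine ⟨mul_mem hUu (Pauli_unitary hQ), fun P hP => ?_⟩
          have h1 : (U * Q) * P * (U * Q)ᴴ = U * (Q * P * Qᴴ) * Uᴴ := by
            rw [Matrix.conjTranspose_mul]; simp only [mul_assoc]
          rw [h1]
          exact hUc _ (Pauli_mul (Pauli_mul hQ hP) (Pauli_star hQ))

lemma smul_mem_Cl (k : ℕ) (a : ℕ) {U : Matrix (Fin 2) (Fin 2) ℂ} (hU : U ∈ Cl k) :
    Complex.I ^ a • U ∈ Cl k := by
  have h := ((Cl_key k).2 _ (Ipow_mem a) U hU).1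
  rwa [smul_mul_assoc, one_mul] at h

lemma XZ_mul (b c b' c' : Bool) : (Xp b * Zp c) * (Xp b' * Zp c')
    = Complex.I ^ (if c && b' then 2 else 0) • (Xp (xor b b') * Zp (xor c c')) := by
  rcases b <;> rcases c <;> rcases b' <;> rcases c' <;>
    · simp only [Xp, Zp, Bool.and_self, Bool.xor_self, if_true, if_false, Bool.and_true,
        Bool.and_false, Bool.true_and, Bool.false_and, Bool.xor_false, Bool.false_xor,
        Bool.true_xor, Bool.xor_true, Bool.not_true, Bool.not_false, cond_true, cond_false,
        ite_true, ite_false]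
      ext i j
      fin_cases i <;> fin_cases j <;>
        simp [sigmaX, sigmaZ, Matrix.mul_apply, Fin.sum_univ_two, Matrix.one_apply,
          Complex.I_sq]

lemma pauli_form {P : Matrix (Fin 2) (Fin 2) ℂ} (hP : P ∈ Pauli) :
    ∃ (a : ℕ) (b c : Bool), P = Complex.I ^ a • (Xp b * Zp c) := by
  induction hP using Submonoid.closure_induction with
  | mem x hx =>
    rcases hx with h | h | h
    · exact ⟨0, true, false, by simp [Xp, Zp, h]⟩
    · exact ⟨0, false, true, by simp [Xp, Zp, h]⟩
    · simp only [Set.mem_singleton_iff] at h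
      exact ⟨1, false, false, by simp [Xp, Zp, h]⟩
  | one => exact ⟨0, false, false, by simp [Xp, Zp]⟩
  | mul x y _ _ hx hy =>
    obtain ⟨a, b, c, rfl⟩ := hx
    obtain ⟨a', b', c', rfl⟩ := hy
    refine ⟨a + a' + (if c && b' then 2 else 0), xor b b', xor c c', ?_⟩
    rw [smul_mul_assoc, Matrix.mul_smul, XZ_mul, smul_smul, smul_smul, ← pow_add, ← pow_add]

----------------- Meq lemmas -----------------

lemma exp_pos_I (α : ℝ) : Complex.exp ((α : ℂ) * Complex.I)
    = (Real.cos α : ℂ) + (Real.sin α : ℂ) * Complex.I := by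
  rw [Complex.exp_mul_I, Complex.ofReal_cos, Complex.ofReal_sin]

lemma exp_neg_I (α : ℝ) : Complex.exp (-(α : ℂ) * Complex.I)
    = (Real.cos α : ℂ) - (Real.sin α : ℂ) * Complex.I := by
  rw [Complex.exp_mul_I, Complex.cos_neg, Complex.sin_neg, Complex.ofReal_cos,
    Complex.ofReal_sin]
  ring

lemma Meq_eq_exp (α : ℝ) : Meq α
    = !![0, Complex.exp (-(α : ℂ) * Complex.I); Complex.exp ((α : ℂ) * Complex.I), 0] := by
  rw [exp_pos_I, exp_neg_I]
  ext i j
  fin_cases i <;> fin_cases j <;> simp [Meq, sigmaX, sigmaY] <;> ring_nf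

lemma Meq_sq (α : ℝ) : Meq α * Meq α = 1 := by
  rw [Meq_eq_exp]
  ext i j
  fin_cases i <;> fin_cases j <;>
    simp [Matrix.mul_apply, Fin.sum_univ_two, Matrix.one_apply, ← Complex.exp_add]

lemma Meq_conjTranspose (α : ℝ) : (Meq α)ᴴ = Meq α := by
  rw [Meq_eq_exp]
  ext i j
  fin_cases i <;> fin_cases j <;>
    simp [Matrix.conjTranspose_apply, ← Complex.exp_conj, _root_.map_mul, Complex.conj_I,
      Complex.conj_ofReal]

lemma Meq_unitary (α : ℝ) : Meq α ∈ Matrix.unitaryGroup (Fin 2) ℂ := by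
  constructor <;>
    rw [Matrix.star_eq_conjTranspose, Meq_conjTranspose] <;> exact Meq_sq α

lemma Meq_X (α : ℝ) : Meq α * sigmaX * Meq α = Meq (2 * α) := by
  rw [Meq_eq_exp α, Meq_eq_exp (2 * α)]
  ext i j
  fin_cases i <;> fin_cases j <;> simp [sigmaX, Matrix.mul_apply, Fin.sum_univ_two,
    ← Complex.exp_add] <;> ring_nf

lemma Meq_Z (α : ℝ) : Meq α * sigmaZ * Meq α = Complex.I ^ 2 • sigmaZ := by
  rw [Meq_eq_exp]
  ext i j
  fin_cases i <;> fin_cases j <;>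
    simp [sigmaZ, Matrix.mul_apply, Fin.sum_univ_two, ← Complex.exp_add, Complex.I_sq]

----------------- main theorem -----------------

/-- For every odd integer `t` and natural number `j`, the equatorial measurement operator
`cos(π t / 2^j) σx + sin(π t / 2^j) σy` lies in the `(j+1)`-st level of the Clifford
hierarchy. -/
theorem equatorial_operator_clifford_level (t : ℤ) (ht : Odd t) (j : ℕ) :
    Meq (Real.pi * (t : ℝ) / 2 ^ j) ∈ Cl (j + 1) := by
  induction j with
  | zero =>
    obtain ⟨m, rfl⟩ := ht
    have harg : Real.pi * ((2 * m + 1 : ℤ) : ℝ) / 2 ^ 0 = (m : ℝ) * (2 * Real.pi) + Real.pi := by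
      push_cast; ring
    have hc : Real.cos (Real.pi * ((2 * m + 1 : ℤ) : ℝ) / 2 ^ 0) = -1 := by
      rw [harg]; exact Real.cos_int_mul_two_pi_add_pi m
    have hs : Real.sin (Real.pi * ((2 * m + 1 : ℤ) : ℝ) / 2 ^ 0) = 0 := by
      rw [harg]
      have : (m : ℝ) * (2 * Real.pi) + Real.pi = ((2 * m + 1 : ℤ) : ℝ) * Real.pi := by
        push_cast; ring
      rw [this]; exact Real.sin_int_mul_pi _
    have : Meq (Real.pi * ((2 * m + 1 : ℤ) : ℝ) / 2 ^ 0)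
        = Complex.I ^ 2 • (Xp true * Zp false) := by
      rw [Meq]; rw [hc, hs]
      simp [Xp, Zp, Complex.I_sq, neg_smul]
    rw [this]
    show _ ∈ Pauli
    exact form_mem 2 true false
  | succ j ih =>
    set α : ℝ := Real.pi * (t : ℝ) / 2 ^ (j + 1) with hα
    have h2α : 2 * α = Real.pi * (t : ℝ) / 2 ^ j := by
      rw [hα]; field_simp; ring
    have hN : Meq (2 * α) ∈ Cl (j + 1) := by rw [h2α]; exact ih
    obtain ⟨hPsub, hMul⟩ := Cl_key (j + 1)
    show Meq α ∈ Cl (j + 1 + 1)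
    refine ⟨Meq_unitary α, fun P hP => ?_⟩
    obtain ⟨a, b, c, rfl⟩ := pauli_form hP
    have hM2 := Meq_sq α
    have key : Meq α * (Complex.I ^ a • (Xp b * Zp c)) * (Meq α)ᴴ
        = Complex.I ^ a • ((Meq α * Xp b * Meq α) * (Meq α * Zp c * Meq α)) := by
      rw [Meq_conjTranspose, Matrix.mul_smul, Matrix.smul_mul]
      congr 1
      have : Meq α * (Meq α * (Zp c * Meq α)) = Zp c * Meq α := by
        rw [← mul_assoc, hM2, one_mul]
      simp only [mul_assoc, this]
    rw [show (Meq α).conjTranspose = (Meq α)ᴴ from rfl, key]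
    rcases b <;> rcases c
    · -- b = false, c = false
      rw [Xp_false, Zp_false, mul_one, hM2, one_mul]
      exact smul_mem_Cl _ a (hPsub _ Pauli_one)
    · -- b = false, c = true
      rw [Xp_false, Zp_true, mul_one, hM2, Meq_Z, one_mul, smul_smul, ← pow_add]
      exact smul_mem_Cl _ (a + 2) (hPsub _ Z_mem)
    · -- b = true, c = false
      rw [Xp_true, Zp_false, mul_one, hM2, Meq_X, mul_one]
      exact smul_mem_Cl _ a hN
    · -- b = true, c = true
      rw [Xp_true, Zp_true, Meq_X, Meq_Z, Matrix.mul_smul, smul_smul, ← pow_add]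
      exact smul_mem_Cl _ (a + 2) ((hMul _ Z_mem _ hN).2)
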